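/- The function $\mathcal{Q}(z) = \frac{\sqrt{z}}{2}\tanh\sqrt{z}$ is starlike univalent on the unit disc; in particular, $\operatorname{Re}\left(\frac{z\mathcal{Q}'(z)}{\mathcal{Q}(z)}\right) = \frac{1}{2} + \operatorname{Re}\left(\sqrt{z}\,\operatorname{csch}(2\sqrt{z})\right) > \frac{1}{2} + \operatorname{csch} 2 > 0$ for all $z \in \mathbb{D} \setminus \{0\}$. -/

import Mathlib

open Metric Nat

/-- `Q(z) = (√z / 2) · tanh √z`. -/
noncomputable def Qfun (z : ℂ) : ℂ := z ^ (1/2 : ℂ) / 2 * Complex.tanh (z ^ (1/2 : ℂ))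

/-- `√z · csch(2√z)`, with value `1/2` at `0`. -/
noncomputable def sqrtCsch (z : ℂ) : ℂ :=
  if z = 0 then 1 / 2 else z ^ (1/2 : ℂ) / Complex.sinh (2 * z ^ (1/2 : ℂ))

/- Auxiliary lemmas -/

lemma sinh_two_eq : Real.sinh 2
    = (Real.exp 1 * Real.exp 1 - (Real.exp 1 * Real.exp 1)⁻¹) / 2 := by
  rw [Real.sinh_eq, Real.exp_neg, ← Real.exp_add]
  norm_num

lemma two_lt_sinh_two : 2 < Real.sinh 2 := by
  have h1 : (2.7182818283 : ℝ) < Real.exp 1 := Real.exp_one_gt_d9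
  have hpos : (0:ℝ) < Real.exp 1 * Real.exp 1 := by positivity
  have hinv : (Real.exp 1 * Real.exp 1) * (Real.exp 1 * Real.exp 1)⁻¹ = 1 :=
    mul_inv_cancel₀ (ne_of_gt hpos)
  have hq : (0:ℝ) < (Real.exp 1 * Real.exp 1)⁻¹ := by positivity
  have h7 : (7:ℝ) < Real.exp 1 * Real.exp 1 := by nlinarith
  have hql : (Real.exp 1 * Real.exp 1)⁻¹ < 1 := by nlinarith
  rw [sinh_two_eq]
  linarith

lemma sinh_two_lt_four : Real.sinh 2 < 4 := by
  have h1 : (2.7182818283 : ℝ) < Real.exp 1 := Real.exp_one_gt_d9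
  have h2 : Real.exp 1 < 2.7182818286 := Real.exp_one_lt_d9
  have hq : (0:ℝ) < (Real.exp 1 * Real.exp 1)⁻¹ := by positivity
  rw [sinh_two_eq]
  nlinarith

lemma hasSum_shift {E : Type*} [AddCommGroup E] [TopologicalSpace E] [IsTopologicalAddGroup E]
    {f : ℕ → E} {S : E} (hf : HasSum f S) : HasSum (fun n => f (n+1)) (S - f 0) := by
  rw [hasSum_nat_add_iff 1]
  simpa using hf

/-- The key series estimate. -/
lemma sinh_est {u : ℂ} (hu : ‖u‖ ≤ 1) :
    ‖Complex.sinh (2*u) - 2*u‖ ≤ ‖u‖^3 * (Real.sinh 2 - 2) := by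
  have hf : HasSum (fun n : ℕ => (2*u) ^ (2*n+1) / ((2*n+1)! : ℂ)) (Complex.sinh (2*u)) :=
    Complex.hasSum_sinh (2*u)
  have hg := hasSum_shift hf
  have hF : HasSum (fun n : ℕ => (2:ℝ) ^ (2*n+1) / ((2*n+1)! : ℝ)) (Real.sinh 2) :=
    Real.hasSum_sinh 2
  have hG := hasSum_shift hF
  simp only [Nat.mul_zero, Nat.zero_add, pow_one, Nat.factorial_one, Nat.cast_one,
    Nat.cast_ofNat, div_one] at hg hG
  have hG' : HasSum (fun n : ℕ => ‖u‖^3 * ((2:ℝ) ^ (2*(n+1)+1) / ((2*(n+1)+1)! : ℝ)))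
      (‖u‖^3 * (Real.sinh 2 - 2)) := by
    have := hG.mul_left (‖u‖^3)
    simpa [Nat.factorial_one] using this
  have hbound : ∀ n : ℕ, ‖(2*u) ^ (2*(n+1)+1) / ((2*(n+1)+1)! : ℂ)‖
      ≤ ‖u‖^3 * ((2:ℝ) ^ (2*(n+1)+1) / ((2*(n+1)+1)! : ℝ)) := by
    intro n
    have hfac : (0:ℝ) < ((2*(n+1)+1)! : ℝ) := by positivity
    rw [norm_div, norm_pow, norm_mul]
    have hnn : ‖(((2*(n+1)+1)! : ℕ) : ℂ)‖ = ((2*(n+1)+1)! : ℝ) := by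
      rw [Complex.norm_natCast]
    rw [hnn]
    rw [div_le_iff₀ hfac]
    have h2 : ‖(2:ℂ)‖ = (2:ℝ) := by norm_num
    rw [h2, mul_pow]
    have hpow : ‖u‖ ^ (2*(n+1)+1) ≤ ‖u‖^3 := by
      apply pow_le_pow_of_le_one (norm_nonneg u) hu
      omega
    have : ‖u‖^3 * ((2:ℝ) ^ (2*(n+1)+1) / ((2*(n+1)+1)! : ℝ)) * ↑(2*(n+1)+1)!
        = ‖u‖^3 * (2:ℝ) ^ (2*(n+1)+1) := by field_simp
    rw [this]
    have h2p : (0:ℝ) ≤ (2:ℝ) ^ (2*(n+1)+1) := by positivity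
    nlinarith [pow_nonneg (norm_nonneg u) 3]
  calc ‖Complex.sinh (2*u) - 2*u‖ = ‖∑' n : ℕ, (2*u) ^ (2*(n+1)+1) / ((2*(n+1)+1)! : ℂ)‖ := by
        rw [hg.tsum_eq]
      _ ≤ ∑' n : ℕ, ‖(2*u) ^ (2*(n+1)+1) / ((2*(n+1)+1)! : ℂ)‖ := by
        apply norm_tsum_le_tsum_norm
        exact Summable.of_nonneg_of_le (fun n => norm_nonneg _) hbound hG'.summable
      _ ≤ ∑' n : ℕ, ‖u‖^3 * ((2:ℝ) ^ (2*(n+1)+1) / ((2*(n+1)+1)! : ℝ)) := by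
        apply Summable.tsum_le_tsum hbound
        · exact Summable.of_nonneg_of_le (fun n => norm_nonneg _) hbound hG'.summable
        · exact hG'.summable
      _ = ‖u‖^3 * (Real.sinh 2 - 2) := hG'.tsum_eq

lemma sinh_two_mul_ne {u : ℂ} (hu0 : u ≠ 0) (hu : ‖u‖ < 1) : Complex.sinh (2*u) ≠ 0 := by
  intro h
  have hest := sinh_est hu.le
  rw [h, zero_sub, norm_neg] at hest
  have h2 : ‖(2:ℂ) * u‖ = 2 * ‖u‖ := by
    rw [norm_mul]; norm_num
  rw [h2] at hest
  have hS : Real.sinh 2 - 2 < 2 := by have := sinh_two_lt_four; linarith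
  have hS0 : (0:ℝ) < Real.sinh 2 - 2 := by have := two_lt_sinh_two; linarith
  have hr : 0 < ‖u‖ := norm_pos_iff.mpr hu0
  have hr2 : ‖u‖^2 < 1 := by nlinarith
  have h3 : ‖u‖^3 < ‖u‖ := by nlinarith
  nlinarith

lemma qfun_eq {z u : ℂ} (h : u^2 = z) : Qfun z = u/2 * Complex.tanh u := by
  by_cases hz : z = 0
  · subst hz
    have hu : u = 0 := by
      have := sq_eq_zero_iff.mp h
      exact this
    rw [hu]
    simp [Qfun, Complex.zero_cpow (by norm_num : (1/2 : ℂ) ≠ 0)]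
  · have hv : (z ^ (1/2:ℂ))^2 = z := by
      rw [sq, ← Complex.cpow_add _ _ hz]
      norm_num
    have hfac : (z ^ (1/2:ℂ) - u) * (z ^ (1/2:ℂ) + u) = 0 := by
      linear_combination hv - h
    rcases mul_eq_zero.mp hfac with h1 | h1
    · rw [Qfun, sub_eq_zero.mp h1]
    · rw [Qfun, eq_neg_of_add_eq_zero_left h1, Complex.tanh_neg]
      ring

lemma sqrtCsch_eq {z u : ℂ} (hz : z ≠ 0) (h : u^2 = z) :
    sqrtCsch z = u / Complex.sinh (2*u) := by
  rw [sqrtCsch, if_neg hz]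
  have hv : (z ^ (1/2:ℂ))^2 = z := by
    rw [sq, ← Complex.cpow_add _ _ hz]
    norm_num
  have hfac : (z ^ (1/2:ℂ) - u) * (z ^ (1/2:ℂ) + u) = 0 := by
    linear_combination hv - h
  rcases mul_eq_zero.mp hfac with h1 | h1
  · rw [sub_eq_zero.mp h1]
  · rw [eq_neg_of_add_eq_zero_left h1]
    rw [show (2:ℂ) * -u = -(2*u) by ring]
    rw [Complex.sinh_neg, neg_div_neg_eq]

lemma exists_sqrt_deriv {z : ℂ} (hz : z ≠ 0) :
    ∃ s : ℂ → ℂ, s z ^ 2 = z ∧ (∀ᶠ x in nhds z, s x ^ 2 = x) ∧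
      HasDerivAt s (1/(2 * s z)) z := by
  have sqp : ∀ x : ℂ, x ≠ 0 → (x ^ (1/2:ℂ))^2 = x := by
    intro x hx
    rw [sq, ← Complex.cpow_add _ _ hx]
    norm_num
  by_cases h : z ∈ Complex.slitPlane
  · refine ⟨fun x => x ^ (1/2:ℂ), sqp z hz, ?_, ?_⟩
    · filter_upwards [eventually_ne_nhds hz] with x hx using sqp x hx
    · have hd := (Complex.hasStrictDerivAt_cpow_const (c := (1/2:ℂ)) h).hasDerivAt
      refine hd.congr_deriv ?_
      symm
      have hv0 : z ^ (1/2:ℂ) ≠ 0 := by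
        intro h0
        apply hz
        rw [← sqp z hz, h0]; ring
      have : (1/2 - 1 : ℂ) = -(1/2) := by norm_num
      rw [this, Complex.cpow_neg]
      field_simp
  · have hre : z.re < 0 := by
      rw [Complex.mem_slitPlane_iff] at h
      push_neg at h
      rcases lt_or_eq_of_le h.1 with h1 | h1
      · exact h1
      · exfalso; apply hz
        apply Complex.ext
        · simp [← h1]
        · simp [h.2]
    have h' : -z ∈ Complex.slitPlane := by
      rw [Complex.mem_slitPlane_iff]
      left
      simpa using hre
    refine ⟨fun x => Complex.I * (-x) ^ (1/2:ℂ), ?_, ?_, ?_⟩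
    · have := sqp (-z) (neg_ne_zero.mpr hz)
      rw [mul_pow, Complex.I_sq, this]; ring
    · filter_upwards [eventually_ne_nhds hz] with x hx
      have := sqp (-x) (neg_ne_zero.mpr hx)
      rw [mul_pow, Complex.I_sq, this]; ring
    · have hd : HasDerivAt (fun x : ℂ => (-x) ^ (1/2:ℂ))
          ((1/2:ℂ) * (-z) ^ ((1/2:ℂ) - 1) * (-1)) z :=
        HasDerivAt.cpow_const (hasDerivAt_neg z) h'
      have hd2 := hd.const_mul Complex.I
      refine hd2.congr_deriv ?_
      symm
      have hu0 : (-z) ^ (1/2:ℂ) ≠ 0 := by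
        intro h0
        apply hz
        have := sqp (-z) (neg_ne_zero.mpr hz)
        rw [h0] at this
        simpa using this.symm
      have : ((1/2:ℂ) - 1) = -(1/2) := by norm_num
      rw [this, Complex.cpow_neg]
      field_simp
      linear_combination Complex.I_sq

lemma hasDerivAt_F {u : ℂ} (hc : Complex.cosh u ≠ 0) :
    HasDerivAt (fun x => x/2 * Complex.tanh x)
      ((Complex.sinh u * Complex.cosh u + u)/(2 * Complex.cosh u^2)) u := by
  have h1 : HasDerivAt (fun x : ℂ => x/2 * (Complex.sinh x / Complex.cosh x))
      (1/2 * (Complex.sinh u / Complex.cosh u) +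
        u/2 * ((Complex.cosh u * Complex.cosh u - Complex.sinh u * Complex.sinh u)
          / Complex.cosh u ^ 2)) u :=
    ((hasDerivAt_id u).div_const 2).mul
      ((Complex.hasDerivAt_sinh u).div (Complex.hasDerivAt_cosh u) hc)
  have heq : (fun x : ℂ => x/2 * Complex.tanh x)
      = fun x : ℂ => x/2 * (Complex.sinh x / Complex.cosh x) := by
    funext x
    rw [Complex.tanh_eq_sinh_div_cosh]
  rw [heq]
  convert h1 using 1
  have hid : Complex.cosh u ^ 2 - Complex.sinh u ^ 2 = 1 := Complex.cosh_sq_sub_sinh_sq u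
  field_simp
  linear_combination (-u) * hid

lemma sq_cases {v w : ℂ} (h : v^2 = w^2) : v = w ∨ v = -w := by
  have hfac : (v - w) * (v + w) = 0 := by linear_combination h
  rcases mul_eq_zero.mp hfac with h1 | h1
  · exact Or.inl (sub_eq_zero.mp h1)
  · exact Or.inr (eq_neg_of_add_eq_zero_left h1)

lemma hasDerivAt_Qfun {z w : ℂ} (hz : z ≠ 0) (hw : w^2 = z)
    (hs : Complex.sinh (2*w) ≠ 0) :
    HasDerivAt Qfun
      ((Complex.sinh w * Complex.cosh w + w) / (4 * w * Complex.cosh w^2)) z := by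
  obtain ⟨s, hsz, hev, hds⟩ := exists_sqrt_deriv hz
  have hcw : Complex.cosh w ≠ 0 := by
    intro h
    apply hs
    rw [Complex.sinh_two_mul, h]; ring
  have hvw : s z = w ∨ s z = -w := sq_cases (hsz.trans hw.symm)
  have hcv : Complex.cosh (s z) ≠ 0 := by
    rcases hvw with h | h <;> rw [h] <;> simpa [Complex.cosh_neg] using hcw
  have hF := hasDerivAt_F hcv
  have hcomp := hF.comp z hds
  have hveq : Qfun =ᶠ[nhds z] (fun x => x/2 * Complex.tanh x) ∘ s := by
    filter_upwards [hev] with x hx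
    exact qfun_eq hx
  have hQ := hcomp.congr_of_eventuallyEq hveq
  have hv0 : s z ≠ 0 := by
    intro h0
    apply hz
    rw [← hsz, h0]; ring
  have hw0 : w ≠ 0 := by
    intro h0
    apply hz
    rw [← hw, h0]; ring
  refine hQ.congr_deriv ?_
  symm
  have hd1 : (4 : ℂ) * w * Complex.cosh w^2 ≠ 0 := by
    simp [hw0, hcw]
  have key : ∀ a b c : ℂ, b ≠ 0 → c ≠ 0 → a / (2*b) * (1/(2*c)) = a/(4*c*b) := by
    intro a b c hb hc
    field_simp
    ring
  rcases hvw with h | h <;> rw [h]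
  · rw [key _ _ _ (pow_ne_zero 2 hcw) hw0]
  · simp only [Complex.sinh_neg, Complex.cosh_neg]
    rw [key _ _ _ (pow_ne_zero 2 hcw) (neg_ne_zero.mpr hw0)]
    rw [_root_.div_eq_div_iff hd1 (by simp [hw0, hcw])]
    ring

theorem Qfun_starlike :
    ∀ z ∈ ball (0:ℂ) 1 \ {0},
      (z * deriv Qfun z / Qfun z).re = 1 / 2 + (sqrtCsch z).re ∧
      1 / 2 + 1 / Real.sinh 2 < 1 / 2 + (sqrtCsch z).re ∧
      0 < 1 / 2 + 1 / Real.sinh 2 := by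
  intro z hz
  have hz0 : z ≠ 0 := hz.2
  have hzn : ‖z‖ < 1 := by simpa [mem_ball, dist_zero_right] using hz.1
  set w := z ^ (1/2:ℂ) with hwdef
  have hw2 : w^2 = z := by
    rw [hwdef, sq, ← Complex.cpow_add _ _ hz0]
    norm_num
  have hw0 : w ≠ 0 := by
    intro h0
    apply hz0
    rw [← hw2, h0]; ring
  have hwn : ‖w‖ < 1 := by
    have h1 : ‖w‖^2 = ‖z‖ := by rw [← hw2]; rw [norm_pow]
    nlinarith [norm_nonneg w]
  have hs2 : Complex.sinh (2*w) ≠ 0 := sinh_two_mul_ne hw0 hwn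
  have hsw : Complex.sinh w ≠ 0 := by
    intro h
    apply hs2
    rw [Complex.sinh_two_mul, h]; ring
  have hcw : Complex.cosh w ≠ 0 := by
    intro h
    apply hs2
    rw [Complex.sinh_two_mul, h]; ring
  have hQz : Qfun z = w/2 * Complex.tanh w := qfun_eq hw2
  have hQne : Qfun z ≠ 0 := by
    rw [hQz, Complex.tanh_eq_sinh_div_cosh]
    field_simp
    simp [hw0, hsw, hcw]
  have hsqc : sqrtCsch z = w / Complex.sinh (2*w) := sqrtCsch_eq hz0 hw2
  have hD := hasDerivAt_Qfun hz0 hw2 hs2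
  have hmain : z * deriv Qfun z / Qfun z = 1/2 + sqrtCsch z := by
    rw [hD.deriv, hQz, hsqc, ← hw2, Complex.tanh_eq_sinh_div_cosh, Complex.sinh_two_mul]
    field_simp
    ring
  have hS := two_lt_sinh_two
  have hS4 := sinh_two_lt_four
  refine ⟨?_, ?_, ?_⟩
  · rw [hmain]
    simp [Complex.add_re]
  · -- the key inequality
    have hr0 : 0 < ‖w‖ := norm_pos_iff.mpr hw0
    set r := ‖w‖ with hrdef
    set S := Real.sinh 2 with hSdef
    set A := Complex.sinh (2*w) with hAdef
    have hest : ‖A - 2*w‖ ≤ r^3 * (S - 2) := sinh_est hwn.le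
    set ζ := A / (2*w) with hζdef
    have h2w : (2:ℂ)*w ≠ 0 := by simp [hw0]
    have hζ1 : ‖ζ - 1‖ ≤ r^2 * (S-2)/2 := by
      have : ζ - 1 = (A - 2*w)/(2*w) := by
        rw [hζdef]
        field_simp
      rw [this, norm_div]
      have hn2w : ‖(2:ℂ)*w‖ = 2*r := by
        rw [norm_mul, Complex.norm_ofNat, hrdef]
      rw [hn2w, div_le_iff₀ (by positivity)]
      calc ‖A - 2*w‖ ≤ r^3 * (S - 2) := hest
        _ = r^2 * (S-2)/2 * (2*r) := by ring
    have hζm : ‖ζ - (S/4 : ℝ)‖ < S/4 := by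
      have hsplit : ζ - (S/4 : ℝ) = (ζ - 1) + ((1 - S/4 : ℝ) : ℂ) := by
        push_cast
        ring
      rw [hsplit]
      calc ‖(ζ - 1) + ((1 - S/4 : ℝ) : ℂ)‖ ≤ ‖ζ - 1‖ + ‖((1 - S/4 : ℝ) : ℂ)‖ :=
            norm_add_le _ _
        _ ≤ r^2 * (S-2)/2 + (1 - S/4) := by
            have : ‖((1 - S/4 : ℝ) : ℂ)‖ = |1 - S/4| := Complex.norm_real _
            rw [this, abs_of_nonneg (by linarith)]
            linarith
        _ < S/4 := by
            have hr2 : r^2 < 1 := by nlinarith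
            nlinarith
    -- extract real/imag inequality
    have hxy : (ζ.re - S/4)^2 + ζ.im^2 < (S/4)^2 := by
      have h1 : ‖ζ - ((S/4 : ℝ) : ℂ)‖^2 < (S/4)^2 := by
        have hnn : 0 ≤ ‖ζ - ((S/4 : ℝ) : ℂ)‖ := norm_nonneg _
        nlinarith
      have h2 : ‖ζ - ((S/4 : ℝ) : ℂ)‖^2 = (ζ.re - S/4)^2 + ζ.im^2 := by
        rw [Complex.sq_norm, Complex.normSq_apply, Complex.sub_re,
          Complex.sub_im, Complex.ofReal_re, Complex.ofReal_im]
        ring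
      linarith [h2 ▸ h1]
    have hζ0 : ζ ≠ 0 := by
      rw [hζdef]
      exact div_ne_zero hs2 h2w
    have hxypos : 0 < ζ.re^2 + ζ.im^2 := by
      have h := Complex.normSq_pos.mpr hζ0
      rw [Complex.normSq_apply] at h
      nlinarith [h]
    have hkey : ζ.re^2 + ζ.im^2 < S/2 * ζ.re := by nlinarith
    have hre : (sqrtCsch z).re = ζ.re / (2*(ζ.re^2 + ζ.im^2)) := by
      have h12 : sqrtCsch z = ((1/2 : ℝ) : ℂ) * ζ⁻¹ := by
        rw [hsqc, hζdef]
        push_cast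
        rw [inv_div]
        ring
      rw [h12, Complex.re_ofReal_mul, Complex.inv_re, Complex.normSq_apply]
      have hne : ζ.re*ζ.re + ζ.im*ζ.im ≠ 0 := by nlinarith
      field_simp
    clear_value r S A ζ
    rw [hre]
    have hd : (0:ℝ) < 2*(ζ.re^2 + ζ.im^2) := by linarith
    have hS0 : (0:ℝ) < S := by linarith
    have hgoal : 1/S < ζ.re / (2*(ζ.re^2 + ζ.im^2)) := by
      rw [div_lt_div_iff₀ hS0 hd]
      linarith only [hkey]
    linarith only [hgoal]
  · have : 0 < Real.sinh 2 := by linarith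
    positivity
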